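/- arXiv:2310.01913 — 2 statements merged into one kernel-verified Lean document; each statement's English description precedes it below -/
import Mathlib

section
/- Assume RH. For every α ∈ ℝ and every T ≥ 15, one has Σ_{0<γ,γ'≤T} T^{iα(γ−γ')} w(γ−γ') = 2π ∫_{−∞}^{∞} e^{−4π|u|} |Σ_{0<γ≤T} T^{iαγ} e^{2πiγu}|² du; in particular F(α,T) is a nonnegative real number and F(−α,T) = F(α,T). -/
open MeasureTheory Filter
open scoped Classical

noncomputable section


open Set Topology in
lemma integrableOn_cexp_Ioi {c : ℂ} (hc : c.re < 0) :
    IntegrableOn (fun u : ℝ => Complex.exp (c * u)) (Ioi (0:ℝ)) := by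
  apply Integrable.mono' (g := fun u : ℝ => Real.exp (c.re * u))
  · have : (fun u : ℝ => Real.exp (c.re * u)) = fun u : ℝ => Real.exp (-(-c.re) * u) := by
      funext u; ring_nf
    rw [this]
    exact exp_neg_integrableOn_Ioi 0 (by linarith)
  · exact (Complex.continuous_exp.comp
      (continuous_const.mul Complex.continuous_ofReal)).aestronglyMeasurable.restrict
  · filter_upwards with u
    rw [Complex.norm_exp]
    simp [Complex.mul_re]

open Set Topology in
lemma integral_cexp_Ioi {c : ℂ} (hc : c.re < 0) :
    ∫ u in Ioi (0:ℝ), Complex.exp (c * u) = -1 / c := by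
  have hc0 : c ≠ 0 := by intro h; rw [h] at hc; simp at hc
  have hd : ∀ x ∈ Ioi (0:ℝ), HasDerivAt (fun u : ℝ => Complex.exp (c * u) / c)
      (Complex.exp (c * x)) x := by
    intro x _
    have h1 : HasDerivAt (fun z : ℂ => Complex.exp (c * z) / c) (Complex.exp (c * x)) (x : ℂ) := by
      have h2 : HasDerivAt (fun z : ℂ => Complex.exp (c * z)) (Complex.exp (c * x) * c) (x : ℂ) := by
        have := (Complex.hasDerivAt_exp (c * x)).comp (x : ℂ) ((hasDerivAt_id (x:ℂ)).const_mul c)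
        exact this.congr_deriv (by ring)
      have := h2.div_const c
      rwa [mul_div_assoc, div_self hc0, mul_one] at this
    exact h1.comp_ofReal
  have htend : Tendsto (fun u : ℝ => Complex.exp (c * u) / c) atTop (𝓝 0) := by
    rw [tendsto_zero_iff_norm_tendsto_zero]
    have h4 : Tendsto (fun u : ℝ => (-c.re) * u) atTop atTop :=
      Tendsto.const_mul_atTop (by linarith) tendsto_id
    have h3 : Tendsto (fun u : ℝ => c.re * u) atTop atBot := by
      have := tendsto_neg_atBot_iff.mpr h4
      refine this.congr fun u => by ring
    have h5 : Tendsto (fun u : ℝ => Real.exp (c.re * u) / ‖c‖) atTop (𝓝 0) := by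
      have := (Real.tendsto_exp_atBot.comp h3).div_const ‖c‖
      simpa using this
    refine h5.congr fun u => ?_
    simp [norm_div, Complex.norm_exp, Complex.mul_re]
  have := integral_Ioi_of_hasDerivAt_of_tendsto
    ((Complex.continuous_exp.comp
      (continuous_const.mul Complex.continuous_ofReal)).div_const c).continuousWithinAt
    hd (integrableOn_cexp_Ioi hc) htend
  rw [this]
  simp [neg_div]

open Set Topology in
lemma integrable_exp_abs_mul_cexp {a : ℝ} (b : ℝ) (ha : 0 < a) :
    Integrable (fun u : ℝ =>
      (Real.exp (-(a*|u|)) : ℂ) * Complex.exp ((b:ℂ)*u*Complex.I)) := by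
  set c₁ : ℂ := -a + b*Complex.I with hc₁def
  set c₂ : ℂ := -a - b*Complex.I with hc₂def
  set f : ℝ → ℂ := fun u => (Real.exp (-(a*|u|)) : ℂ) * Complex.exp ((b:ℂ)*u*Complex.I) with hf
  have hre₁ : c₁.re = -a := by simp [hc₁def]
  have hre₂ : c₂.re = -a := by simp [hc₂def]
  have hr₁ : c₁.re < 0 := by rw [hre₁]; linarith
  have hr₂ : c₂.re < 0 := by rw [hre₂]; linarith
  have hEq₁ : ∀ u ∈ Ioi (0:ℝ), f u = Complex.exp (c₁ * u) := by
    intro u hu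
    rw [hf]
    simp only [abs_of_pos (mem_Ioi.mp hu)]
    rw [Complex.ofReal_exp, ← Complex.exp_add]
    congr 1
    push_cast [hc₁def]
    ring
  have hEq₂ : ∀ u ∈ Ioi (0:ℝ), f (-u) = Complex.exp (c₂ * u) := by
    intro u hu
    rw [hf]
    simp only [abs_neg, abs_of_pos (mem_Ioi.mp hu)]
    rw [Complex.ofReal_exp, ← Complex.exp_add]
    congr 1
    push_cast [hc₂def]
    ring
  have I1 : IntegrableOn f (Ioi (0:ℝ)) :=
    (integrableOn_cexp_Ioi hr₁).congr_fun (fun u hu => (hEq₁ u hu).symm) measurableSet_Ioi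
  have I2 : IntegrableOn f (Iic (0:ℝ)) := by
    rw [← (Measure.measurePreserving_neg (volume : Measure ℝ)).integrableOn_comp_preimage
        (Homeomorph.neg ℝ).measurableEmbedding]
    simp only [Function.comp_def, neg_preimage, neg_Iic, neg_zero]
    rw [integrableOn_Ici_iff_integrableOn_Ioi]
    exact (integrableOn_cexp_Ioi hr₂).congr_fun (fun u hu => (hEq₂ u hu).symm) measurableSet_Ioi
  rw [← integrableOn_univ, ← Iic_union_Ioi (a := (0:ℝ)), integrableOn_union]
  exact ⟨I2, I1⟩

open Set Topology in
lemma integral_exp_abs_mul_cexp {a : ℝ} (b : ℝ) (ha : 0 < a) :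
    ∫ u : ℝ, (Real.exp (-(a*|u|)) : ℂ) * Complex.exp ((b:ℂ)*u*Complex.I)
      = 2*a/((a:ℂ)^2+(b:ℂ)^2) := by
  set c₁ : ℂ := -a + b*Complex.I with hc₁def
  set c₂ : ℂ := -a - b*Complex.I with hc₂def
  set f : ℝ → ℂ := fun u => (Real.exp (-(a*|u|)) : ℂ) * Complex.exp ((b:ℂ)*u*Complex.I) with hf
  have hre₁ : c₁.re = -a := by simp [hc₁def]
  have hre₂ : c₂.re = -a := by simp [hc₂def]
  have hr₁ : c₁.re < 0 := by rw [hre₁]; linarith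
  have hr₂ : c₂.re < 0 := by rw [hre₂]; linarith
  have hc₁ : c₁ ≠ 0 := fun h => by rw [h] at hr₁; simp at hr₁
  have hc₂ : c₂ ≠ 0 := fun h => by rw [h] at hr₂; simp at hr₂
  have hEq₁ : ∀ u ∈ Ioi (0:ℝ), f u = Complex.exp (c₁ * u) := by
    intro u hu
    rw [hf]
    simp only [abs_of_pos (mem_Ioi.mp hu)]
    rw [Complex.ofReal_exp, ← Complex.exp_add]
    congr 1
    push_cast [hc₁def]
    ring
  have hEq₂ : ∀ u ∈ Ioi (0:ℝ), f (-u) = Complex.exp (c₂ * u) := by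
    intro u hu
    rw [hf]
    simp only [abs_neg, abs_of_pos (mem_Ioi.mp hu)]
    rw [Complex.ofReal_exp, ← Complex.exp_add]
    congr 1
    push_cast [hc₂def]
    ring
  have hint := integrable_exp_abs_mul_cexp b ha
  rw [← hf] at hint
  rw [← intervalIntegral.integral_Iic_add_Ioi (hint.integrableOn) (hint.integrableOn)]
  have e1 : ∫ u in Ioi (0:ℝ), f u = -1/c₁ := by
    rw [setIntegral_congr_fun measurableSet_Ioi hEq₁]
    exact integral_cexp_Ioi hr₁
  have e2 : ∫ u in Iic (0:ℝ), f u = -1/c₂ := by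
    have := integral_comp_neg_Iic (0:ℝ) (fun v => f (-v))
    simp only [neg_neg, neg_zero] at this
    rw [this, setIntegral_congr_fun measurableSet_Ioi hEq₂]
    exact integral_cexp_Ioi hr₂
  rw [e1, e2]
  have hprod : c₁ * c₂ = (a:ℂ)^2 + (b:ℂ)^2 := by
    rw [hc₁def, hc₂def]
    linear_combination (-(b:ℂ)^2) * Complex.I_sq
  have hden : (a:ℂ)^2 + (b:ℂ)^2 ≠ 0 := by
    have : ((a^2+b^2 : ℝ) : ℂ) ≠ 0 := by
      rw [Complex.ofReal_ne_zero]; positivity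
    push_cast at this; exact this
  rw [div_add_div _ _ hc₂ hc₁]
  rw [mul_comm c₂ c₁, hprod]
  rw [div_eq_div_iff hden hden]
  rw [hc₁def, hc₂def]
  ring

lemma conj_cpow_real {T : ℝ} (hT : 0 < T) (z : ℂ) :
    (starRingEnd ℂ) ((T:ℂ)^z) = (T:ℂ)^((starRingEnd ℂ) z) := by
  have hne : (T:ℂ) ≠ 0 := by
    simp only [ne_eq, Complex.ofReal_eq_zero]; linarith
  rw [Complex.cpow_def_of_ne_zero hne, Complex.cpow_def_of_ne_zero hne,
    ← Complex.exp_conj, map_mul]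
  congr 1
  rw [← Complex.ofReal_log hT.le, Complex.conj_ofReal]

lemma term_eq {T : ℝ} (hT : 0 < T) (α γ γ' u : ℝ) (m m' : ℕ) :
    (Real.exp (-(4*Real.pi*|u|)) : ℂ) *
      (((m:ℂ) * (T:ℂ)^(Complex.I*(α:ℂ)*(γ:ℂ)) *
          Complex.exp (((2*Real.pi*γ*u : ℝ):ℂ) * Complex.I)) *
        (starRingEnd ℂ) ((m':ℂ) * (T:ℂ)^(Complex.I*(α:ℂ)*(γ':ℂ)) *
          Complex.exp (((2*Real.pi*γ'*u : ℝ):ℂ) * Complex.I)))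
    = ((m:ℂ) * (m':ℂ) * (T:ℂ)^(Complex.I*(α:ℂ)*((γ:ℂ)-(γ':ℂ)))) *
        ((Real.exp (-(4*Real.pi*|u|)) : ℂ) *
          Complex.exp (((2*Real.pi*γ - 2*Real.pi*γ' : ℝ):ℂ) * (u:ℂ) * Complex.I)) := by
  have hne : (T:ℂ) ≠ 0 := by
    simp only [ne_eq, Complex.ofReal_eq_zero]; linarith
  rw [map_mul, map_mul, conj_cpow_real hT, ← Complex.exp_conj]
  have e0 : (starRingEnd ℂ) ((m':ℂ)) = (m':ℂ) := by simp
  have e1 : (starRingEnd ℂ) (Complex.I*(α:ℂ)*(γ':ℂ)) = -(Complex.I*(α:ℂ)*(γ':ℂ)) := by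
    simp [map_mul, Complex.conj_I, Complex.conj_ofReal]
  have e2 : (starRingEnd ℂ) (((2*Real.pi*γ'*u : ℝ):ℂ) * Complex.I)
      = -(((2*Real.pi*γ'*u : ℝ):ℂ) * Complex.I) := by
    rw [map_mul, Complex.conj_ofReal, Complex.conj_I]
    ring
  rw [e0, e1, e2]
  have h1 : (T:ℂ)^(Complex.I*(α:ℂ)*(γ:ℂ)) * (T:ℂ)^(-(Complex.I*(α:ℂ)*(γ':ℂ)))
      = (T:ℂ)^(Complex.I*(α:ℂ)*((γ:ℂ)-(γ':ℂ))) := by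
    rw [← Complex.cpow_add _ _ hne]
    congr 1
    ring
  have h2 : Complex.exp (((2*Real.pi*γ*u : ℝ):ℂ) * Complex.I) *
      Complex.exp (-(((2*Real.pi*γ'*u : ℝ):ℂ) * Complex.I))
      = Complex.exp (((2*Real.pi*γ - 2*Real.pi*γ' : ℝ):ℂ) * (u:ℂ) * Complex.I) := by
    rw [← Complex.exp_add]
    congr 1
    push_cast
    ring
  rw [← h1, ← h2]
  ring

/-- Multiplicity of `1/2 + γ i` as a zero of the Riemann zeta-function. -/
def zetaMult (γ : ℝ) : ℕ :=
  if h : AnalyticAt ℂ riemannZeta (1 / 2 + γ * Complex.I) then (analyticOrderAt riemannZeta (1 / 2 + γ * Complex.I)).toNat else 0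

/-- `N(T)`: the number of nontrivial zeros of `ζ` with ordinate in `(0, T]`,
counted with multiplicity (under RH). -/
def zeroCount (T : ℝ) : ℝ :=
  ∑' γ : ℝ, if 0 < γ ∧ γ ≤ T then (zetaMult γ : ℝ) else 0

/-- The double sum `∑_{0<γ,γ'≤T} T^{iα(γ-γ')} w(γ-γ')` with `w(u) = 4/(4+u²)`,
zeros counted with multiplicity. -/
def pairSum (α T : ℝ) : ℂ :=
  ∑' γ : ℝ, ∑' γ' : ℝ,
    if (0 < γ ∧ γ ≤ T) ∧ (0 < γ' ∧ γ' ≤ T) then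
      (zetaMult γ : ℂ) * (zetaMult γ' : ℂ) * (T : ℂ) ^ (Complex.I * (α : ℂ) * ((γ : ℂ) - (γ' : ℂ)))
        * (4 / (4 + ((γ : ℂ) - (γ' : ℂ)) ^ 2))
    else 0

/-- Montgomery's function `F(α, T)` (real-valued). -/
def montgomeryF (α T : ℝ) : ℝ := (pairSum α T).re / zeroCount T

open Set Topology in
lemma zeta_zero_of_zetaMult_ne_zero {γ : ℝ} (h : zetaMult γ ≠ 0) :
    riemannZeta (1 / 2 + γ * Complex.I) = 0 := by
  rw [zetaMult] at h
  split_ifs at h with ha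
  · by_contra hne
    have : analyticOrderAt riemannZeta (1 / 2 + γ * Complex.I) = (0 : ℕ) := by
      rw [ha.analyticOrderAt_eq_natCast]
      exact ⟨riemannZeta, ha, hne, by filter_upwards with z; simp⟩
    rw [this] at h
    simp at h
  · exact absurd rfl h

open Set Topology in
lemma zetaMult_support_finite (T : ℝ) :
    {γ : ℝ | (0 < γ ∧ γ ≤ T) ∧ zetaMult γ ≠ 0}.Finite := by
  set g : ℝ → ℂ := fun t => 1 / 2 + t * Complex.I with hg
  have hginj : Function.Injective g := by
    intro a b hab
    have := congrArg Complex.im hab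
    simpa [hg] using this
  have hgne1 : ∀ t : ℝ, g t ≠ 1 := by
    intro t h
    have := congrArg Complex.re h
    simp [hg] at this
  set A : Set ℝ := {γ | γ ∈ Icc 0 T ∧ riemannZeta (g γ) = 0} with hA
  have hsub : {γ : ℝ | (0 < γ ∧ γ ≤ T) ∧ zetaMult γ ≠ 0} ⊆ A := by
    rintro γ ⟨⟨h1, h2⟩, h3⟩
    exact ⟨⟨h1.le, h2⟩, zeta_zero_of_zetaMult_ne_zero h3⟩
  refine Set.Finite.subset ?_ hsub
  by_contra hinf
  rw [← Set.not_infinite, not_not] at hinf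
  obtain ⟨x, hxK, hacc⟩ := hinf.exists_accPt_of_subset_isCompact isCompact_Icc
    (fun γ hγ => hγ.1)
  have hfreq0 : ∃ᶠ y in 𝓝[≠] x, y ∈ A := by
    rw [accPt_iff_frequently] at hacc
    rw [frequently_nhdsWithin_iff]
    exact hacc.mono fun y hy => ⟨hy.2, hy.1⟩
  have htend : Tendsto g (𝓝[≠] x) (𝓝[≠] (g x)) := by
    have hgc : Continuous g := by
      rw [hg]
      exact continuous_const.add (Complex.continuous_ofReal.mul continuous_const)
    refine (hgc.continuousWithinAt).tendsto_nhdsWithin ?_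
    intro y hy
    exact fun h => hy (hginj h)
  have hfreq : ∃ᶠ z in 𝓝[≠] (g x), riemannZeta z = 0 :=
    htend.frequently (hfreq0.mono fun y hy => hy.2)
  have hU : AnalyticOnNhd ℂ riemannZeta {(1:ℂ)}ᶜ :=
    DifferentiableOn.analyticOnNhd
      (fun z hz => (differentiableAt_riemannZeta hz).differentiableWithinAt)
      isOpen_compl_singleton
  have hpre : IsPreconnected ({(1:ℂ)}ᶜ) :=
    (isConnected_compl_singleton_of_one_lt_rank (by simp) 1).isPreconnected
  have hzero := hU.eqOn_zero_of_preconnected_of_frequently_eq_zero hpre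
    (Set.mem_compl_singleton_iff.mpr (hgne1 x)) hfreq
  have h2 : riemannZeta 2 = 0 := hzero (by norm_num)
  rw [riemannZeta_two] at h2
  simp at h2

lemma mem_support_iff {T γ : ℝ} :
    γ ∈ (zetaMult_support_finite T).toFinset ↔ (0 < γ ∧ γ ≤ T) ∧ zetaMult γ ≠ 0 := by
  rw [Set.Finite.mem_toFinset]; rfl

lemma pairSum_eq (α T : ℝ) :
    pairSum α T = ∑ γ ∈ (zetaMult_support_finite T).toFinset,
      ∑ γ' ∈ (zetaMult_support_finite T).toFinset,
      (zetaMult γ : ℂ) * (zetaMult γ' : ℂ) *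
        (T : ℂ) ^ (Complex.I * (α : ℂ) * ((γ : ℂ) - (γ' : ℂ)))
        * (4 / (4 + ((γ : ℂ) - (γ' : ℂ)) ^ 2)) := by
  set S := (zetaMult_support_finite T).toFinset with hS
  have hzero : ∀ γ γ' : ℝ, γ' ∉ S →
      (if (0 < γ ∧ γ ≤ T) ∧ (0 < γ' ∧ γ' ≤ T) then
        (zetaMult γ : ℂ) * (zetaMult γ' : ℂ) *
          (T : ℂ) ^ (Complex.I * (α : ℂ) * ((γ : ℂ) - (γ' : ℂ)))
          * (4 / (4 + ((γ : ℂ) - (γ' : ℂ)) ^ 2))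
      else 0) = 0 := by
    intro γ γ' hγ'
    by_cases hc : (0 < γ ∧ γ ≤ T) ∧ (0 < γ' ∧ γ' ≤ T)
    · rw [if_pos hc]
      have : zetaMult γ' = 0 := by
        by_contra hne
        exact hγ' (mem_support_iff.mpr ⟨hc.2, hne⟩)
      rw [this]
      simp
    · rw [if_neg hc]
  have hzero' : ∀ γ : ℝ, γ ∉ S →
      (∑' γ' : ℝ, if (0 < γ ∧ γ ≤ T) ∧ (0 < γ' ∧ γ' ≤ T) then
        (zetaMult γ : ℂ) * (zetaMult γ' : ℂ) *
          (T : ℂ) ^ (Complex.I * (α : ℂ) * ((γ : ℂ) - (γ' : ℂ)))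
          * (4 / (4 + ((γ : ℂ) - (γ' : ℂ)) ^ 2))
      else 0) = 0 := by
    intro γ hγ
    have : ∀ γ' : ℝ, (if (0 < γ ∧ γ ≤ T) ∧ (0 < γ' ∧ γ' ≤ T) then
        (zetaMult γ : ℂ) * (zetaMult γ' : ℂ) *
          (T : ℂ) ^ (Complex.I * (α : ℂ) * ((γ : ℂ) - (γ' : ℂ)))
          * (4 / (4 + ((γ : ℂ) - (γ' : ℂ)) ^ 2))
      else 0) = 0 := by
      intro γ'
      by_cases hc : (0 < γ ∧ γ ≤ T) ∧ (0 < γ' ∧ γ' ≤ T)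
      · rw [if_pos hc]
        have : zetaMult γ = 0 := by
          by_contra hne
          exact hγ (mem_support_iff.mpr ⟨hc.1, hne⟩)
        rw [this]
        simp
      · rw [if_neg hc]
    simp only [this]
    exact tsum_zero
  rw [pairSum]
  rw [tsum_eq_sum (s := S) hzero']
  refine Finset.sum_congr rfl fun γ hγ => ?_
  rw [tsum_eq_sum (s := S) (fun γ' hγ' => hzero γ γ' hγ')]
  refine Finset.sum_congr rfl fun γ' hγ' => ?_
  rw [if_pos ⟨(mem_support_iff.mp hγ).1, (mem_support_iff.mp hγ').1⟩]

lemma const_calc (x y : ℝ) :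
    ((2*Real.pi : ℝ):ℂ) * (2*((4*Real.pi : ℝ):ℂ)/(((4*Real.pi : ℝ):ℂ)^2
        + ((2*Real.pi*x - 2*Real.pi*y : ℝ):ℂ)^2))
      = 4/(4+((x:ℂ)-(y:ℂ))^2) := by
  have d1 : (((4*Real.pi : ℝ):ℂ)^2 + ((2*Real.pi*x - 2*Real.pi*y : ℝ):ℂ)^2) ≠ 0 := by
    rw [← Complex.ofReal_pow, ← Complex.ofReal_pow, ← Complex.ofReal_add,
      Complex.ofReal_ne_zero]
    positivity
  have d2 : (4:ℂ)+((x:ℂ)-(y:ℂ))^2 ≠ 0 := by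
    have h : (4:ℂ)+((x:ℂ)-(y:ℂ))^2 = (((4+(x-y)^2 : ℝ)):ℂ) := by push_cast; ring
    rw [h, Complex.ofReal_ne_zero]
    positivity
  rw [mul_div_assoc', div_eq_div_iff d1 d2]
  push_cast
  ring

/-- Assume RH. For every `α ∈ ℝ` and `T ≥ 15`, one has
`∑_{0<γ,γ'≤T} T^{iα(γ−γ')} w(γ−γ') = 2π ∫ e^{−4π|u|} |∑_{0<γ≤T} T^{iαγ} e^{2πiγu}|² du`;
in particular `F(α,T)` is a nonnegative real number and `F(−α,T) = F(α,T)`. -/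
theorem statement9 (hRH : RiemannHypothesis) (α T : ℝ) (hT : 15 ≤ T) :
    pairSum α T =
      ((2 * Real.pi * ∫ u : ℝ, Real.exp (-(4 * Real.pi * |u|)) *
        ‖(∑' γ : ℝ,
          if 0 < γ ∧ γ ≤ T then
            (zetaMult γ : ℂ) * (T : ℂ) ^ (Complex.I * (α : ℂ) * (γ : ℂ)) *
              Complex.exp (((2 * Real.pi * γ * u : ℝ) : ℂ) * Complex.I)
          else 0)‖ ^ 2 : ℝ) : ℂ) ∧
    0 ≤ montgomeryF α T ∧ montgomeryF (-α) T = montgomeryF α T := by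
  have hT0 : (0:ℝ) < T := by linarith
  have ha : (0:ℝ) < 4*Real.pi := by positivity
  set S := (zetaMult_support_finite T).toFinset with hSdef
  have hZ : ∀ u : ℝ, (∑' γ : ℝ, if 0 < γ ∧ γ ≤ T then
        (zetaMult γ : ℂ) * (T : ℂ) ^ (Complex.I * (α : ℂ) * (γ : ℂ)) *
          Complex.exp (((2 * Real.pi * γ * u : ℝ) : ℂ) * Complex.I) else 0)
      = ∑ γ ∈ S, (zetaMult γ : ℂ) * (T : ℂ) ^ (Complex.I * (α : ℂ) * (γ : ℂ)) *
          Complex.exp (((2 * Real.pi * γ * u : ℝ) : ℂ) * Complex.I) := by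
    intro u
    rw [tsum_eq_sum (s := S) ?_]
    · exact Finset.sum_congr rfl fun γ hγ => if_pos (mem_support_iff.mp hγ).1
    · intro γ hγ
      by_cases hc : 0 < γ ∧ γ ≤ T
      · rw [if_pos hc]
        have h0 : zetaMult γ = 0 := by
          by_contra hne
          exact hγ (mem_support_iff.mpr ⟨hc, hne⟩)
        rw [h0]
        simp
      · rw [if_neg hc]
  have hint : ∀ (γ γ' : ℝ), Integrable (fun u : ℝ =>
      ((zetaMult γ:ℂ)*(zetaMult γ':ℂ)*(T:ℂ)^(Complex.I*(α:ℂ)*((γ:ℂ)-(γ':ℂ)))) *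
        ((Real.exp (-(4*Real.pi*|u|)) : ℂ) *
          Complex.exp (((2*Real.pi*γ - 2*Real.pi*γ' : ℝ):ℂ)*(u:ℂ)*Complex.I))) :=
    fun γ γ' => (integrable_exp_abs_mul_cexp _ ha).const_mul _
  have hpt : ∀ u : ℝ, ((Real.exp (-(4 * Real.pi * |u|)) *
        ‖(∑' γ : ℝ,
          if 0 < γ ∧ γ ≤ T then
            (zetaMult γ : ℂ) * (T : ℂ) ^ (Complex.I * (α : ℂ) * (γ : ℂ)) *
              Complex.exp (((2 * Real.pi * γ * u : ℝ) : ℂ) * Complex.I)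
          else 0)‖ ^ 2 : ℝ) : ℂ)
      = ∑ γ ∈ S, ∑ γ' ∈ S,
          ((zetaMult γ:ℂ)*(zetaMult γ':ℂ)*(T:ℂ)^(Complex.I*(α:ℂ)*((γ:ℂ)-(γ':ℂ)))) *
            ((Real.exp (-(4*Real.pi*|u|)) : ℂ) *
              Complex.exp (((2*Real.pi*γ - 2*Real.pi*γ' : ℝ):ℂ)*(u:ℂ)*Complex.I)) := by
    intro u
    rw [hZ u, Complex.ofReal_mul]
    have h1 : ((‖(∑ γ ∈ S, (zetaMult γ : ℂ) *
        (T : ℂ) ^ (Complex.I * (α : ℂ) * (γ : ℂ)) *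
        Complex.exp (((2 * Real.pi * γ * u : ℝ) : ℂ) * Complex.I))‖)^2 : ℝ)
        = Complex.normSq (∑ γ ∈ S, (zetaMult γ : ℂ) *
          (T : ℂ) ^ (Complex.I * (α : ℂ) * (γ : ℂ)) *
          Complex.exp (((2 * Real.pi * γ * u : ℝ) : ℂ) * Complex.I)) := Complex.sq_norm _
    rw [h1, ← Complex.mul_conj, map_sum, Finset.sum_mul_sum, Finset.mul_sum]
    refine Finset.sum_congr rfl fun γ _ => ?_
    rw [Finset.mul_sum]
    refine Finset.sum_congr rfl fun γ' _ => ?_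
    exact term_eq hT0 α γ γ' u _ _
  have main : ((2 * Real.pi * ∫ u : ℝ, Real.exp (-(4 * Real.pi * |u|)) *
        ‖(∑' γ : ℝ,
          if 0 < γ ∧ γ ≤ T then
            (zetaMult γ : ℂ) * (T : ℂ) ^ (Complex.I * (α : ℂ) * (γ : ℂ)) *
              Complex.exp (((2 * Real.pi * γ * u : ℝ) : ℂ) * Complex.I)
          else 0)‖ ^ 2 : ℝ) : ℂ) = pairSum α T := by
    have hcast : ∀ f : ℝ → ℝ, ((∫ u, f u : ℝ) : ℂ) = ∫ u, ((f u : ℝ) : ℂ) :=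
      fun f => integral_ofReal.symm
    rw [pairSum_eq, Complex.ofReal_mul, hcast]
    simp only [hpt]
    rw [integral_finset_sum _ (fun γ _ => integrable_finset_sum _ (fun γ' _ => hint γ γ')),
      Finset.mul_sum]
    refine Finset.sum_congr rfl fun γ _ => ?_
    rw [integral_finset_sum _ (fun γ' _ => hint γ γ'), Finset.mul_sum]
    refine Finset.sum_congr rfl fun γ' _ => ?_
    rw [integral_const_mul, integral_exp_abs_mul_cexp _ ha, mul_left_comm, const_calc]
  refine ⟨main.symm, ?_, ?_⟩
  · rw [montgomeryF]
    apply div_nonneg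
    · rw [← main, Complex.ofReal_re]
      apply mul_nonneg (by positivity)
      apply integral_nonneg
      intro u
      positivity
    · rw [zeroCount]
      apply tsum_nonneg
      intro γ
      by_cases hc : 0 < γ ∧ γ ≤ T
      · rw [if_pos hc]; positivity
      · rw [if_neg hc]
  · have hsym : pairSum (-α) T = pairSum α T := by
      rw [pairSum_eq, pairSum_eq, Finset.sum_comm]
      refine Finset.sum_congr rfl fun x _ => Finset.sum_congr rfl fun y _ => ?_
      have hexp : Complex.I*((-α : ℝ):ℂ)*((y:ℂ)-(x:ℂ)) = Complex.I*(α:ℂ)*((x:ℂ)-(y:ℂ)) := by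
        push_cast
        ring
      have hden : (4:ℂ)+((y:ℂ)-(x:ℂ))^2 = (4:ℂ)+((x:ℂ)-(y:ℂ))^2 := by ring
      rw [hexp, hden]
      ring
    rw [montgomeryF, montgomeryF, hsym]

end
end

section
/- The function s : ℝ → ℝ defined by s(x) = sin x / x for x ≠ 0 and s(0) = 1 attains a global minimum on ℝ, and its minimum value c₀ = min_{x∈ℝ} sin x / x satisfies −0.217234 < c₀ < −0.217233. -/
open MeasureTheory Filter
open scoped Classical

noncomputable section

/-- The function equal to `sin x / x` for `x ≠ 0` and to `1` at `x = 0`. -/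
def sinc (x : ℝ) : ℝ := if x = 0 then 1 else Real.sin x / x

/-- `c₀ = min_{x ∈ ℝ} sin x / x = -0.217233...`. -/
def c0 : ℝ := sInf (Set.range sinc)

open Real hiding sinc
open Set

lemma nonneg_of_hasDerivAt {f f' : ℝ → ℝ} (hd : ∀ t, HasDerivAt f (f' t) t)
    (h0 : f 0 = 0) (hpos : ∀ t, 0 ≤ t → 0 ≤ f' t) : ∀ x, 0 ≤ x → 0 ≤ f x := by
  intro x hx
  have hm : MonotoneOn f (Ici (0:ℝ)) := by
    refine monotoneOn_of_hasDerivWithinAt_nonneg (convex_Ici 0)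
      (fun t _ => (hd t).continuousAt.continuousWithinAt)
      (fun t _ => (hd t).hasDerivWithinAt)
      (fun t ht => hpos t ?_)
    rw [interior_Ici] at ht
    exact le_of_lt ht
  have := hm self_mem_Ici (mem_Ici.mpr hx) hx
  rw [h0] at this
  exact this

lemma sin_ge3 : ∀ x : ℝ, 0 ≤ x → x - x^3/6 ≤ Real.sin x := by
  have key := nonneg_of_hasDerivAt (f := fun t : ℝ => Real.sin t - (t - t^3/6))
    (f' := fun t : ℝ => Real.cos t - (1 - t^2/2)) ?_ (by norm_num) ?_
  · intro x hx; have := key x hx; linarith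
  · intro t
    have h := (Real.hasDerivAt_sin t).sub ((hasDerivAt_id' (x := t)).sub ((hasDerivAt_pow 3 t).div_const 6))
    refine h.congr_deriv ?_
    push_cast; ring
  · intro t _
    nlinarith [Real.one_sub_sq_div_two_le_cos (x := t)]
lemma cos_le4 : ∀ x : ℝ, 0 ≤ x → Real.cos x ≤ 1 - x^2/2 + x^4/24 := by
  have key := nonneg_of_hasDerivAt (f := fun t : ℝ => (1 - t^2/2 + t^4/24) - Real.cos t)
    (f' := fun t : ℝ => Real.sin t - (t - t^3/6)) ?_ (by norm_num) ?_
  · intro x hx; have := key x hx; linarith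
  · intro t
    have h := ((((hasDerivAt_const t (1:ℝ)).sub ((hasDerivAt_pow 2 t).div_const 2)).add ((hasDerivAt_pow 4 t).div_const 24))).sub (Real.hasDerivAt_cos t)
    refine h.congr_deriv ?_
    push_cast; ring
  · intro t ht
    have := sin_ge3 t ht; linarith

lemma sin_le5 : ∀ x : ℝ, 0 ≤ x → Real.sin x ≤ x - x^3/6 + x^5/120 := by
  have key := nonneg_of_hasDerivAt (f := fun t : ℝ => (t - t^3/6 + t^5/120) - Real.sin t)
    (f' := fun t : ℝ => (1 - t^2/2 + t^4/24) - Real.cos t) ?_ (by norm_num) ?_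
  · intro x hx; have := key x hx; linarith
  · intro t
    have h := ((((hasDerivAt_id' (x := t)).sub ((hasDerivAt_pow 3 t).div_const 6)).add ((hasDerivAt_pow 5 t).div_const 120))).sub (Real.hasDerivAt_sin t)
    refine h.congr_deriv ?_
    push_cast; ring
  · intro t ht
    have := cos_le4 t ht; linarith

lemma cos_ge6 : ∀ x : ℝ, 0 ≤ x → 1 - x^2/2 + x^4/24 - x^6/720 ≤ Real.cos x := by
  have key := nonneg_of_hasDerivAt (f := fun t : ℝ => Real.cos t - (1 - t^2/2 + t^4/24 - t^6/720))
    (f' := fun t : ℝ => (t - t^3/6 + t^5/120) - Real.sin t) ?_ (by norm_num) ?_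
  · intro x hx; have := key x hx; linarith
  · intro t
    have h := (Real.hasDerivAt_cos t).sub (((((hasDerivAt_const t (1:ℝ)).sub ((hasDerivAt_pow 2 t).div_const 2)).add ((hasDerivAt_pow 4 t).div_const 24)).sub ((hasDerivAt_pow 6 t).div_const 720)))
    refine h.congr_deriv ?_
    push_cast; ring
  · intro t ht
    have := sin_le5 t ht; linarith

lemma sin_ge7 : ∀ x : ℝ, 0 ≤ x → x - x^3/6 + x^5/120 - x^7/5040 ≤ Real.sin x := by
  have key := nonneg_of_hasDerivAt (f := fun t : ℝ => Real.sin t - (t - t^3/6 + t^5/120 - t^7/5040))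
    (f' := fun t : ℝ => Real.cos t - (1 - t^2/2 + t^4/24 - t^6/720)) ?_ (by norm_num) ?_
  · intro x hx; have := key x hx; linarith
  · intro t
    have h := (Real.hasDerivAt_sin t).sub (((((hasDerivAt_id' (x := t)).sub ((hasDerivAt_pow 3 t).div_const 6)).add ((hasDerivAt_pow 5 t).div_const 120)).sub ((hasDerivAt_pow 7 t).div_const 5040)))
    refine h.congr_deriv ?_
    push_cast; ring
  · intro t ht
    have := cos_ge6 t ht; linarith

lemma cos_le8 : ∀ x : ℝ, 0 ≤ x → Real.cos x ≤ 1 - x^2/2 + x^4/24 - x^6/720 + x^8/40320 := by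
  have key := nonneg_of_hasDerivAt (f := fun t : ℝ => (1 - t^2/2 + t^4/24 - t^6/720 + t^8/40320) - Real.cos t)
    (f' := fun t : ℝ => Real.sin t - (t - t^3/6 + t^5/120 - t^7/5040)) ?_ (by norm_num) ?_
  · intro x hx; have := key x hx; linarith
  · intro t
    have h := ((((((hasDerivAt_const t (1:ℝ)).sub ((hasDerivAt_pow 2 t).div_const 2)).add ((hasDerivAt_pow 4 t).div_const 24)).sub ((hasDerivAt_pow 6 t).div_const 720)).add ((hasDerivAt_pow 8 t).div_const 40320))).sub (Real.hasDerivAt_cos t)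
    refine h.congr_deriv ?_
    push_cast; ring
  · intro t ht
    have := sin_ge7 t ht; linarith

lemma sin_le9 : ∀ x : ℝ, 0 ≤ x → Real.sin x ≤ x - x^3/6 + x^5/120 - x^7/5040 + x^9/362880 := by
  have key := nonneg_of_hasDerivAt (f := fun t : ℝ => (t - t^3/6 + t^5/120 - t^7/5040 + t^9/362880) - Real.sin t)
    (f' := fun t : ℝ => (1 - t^2/2 + t^4/24 - t^6/720 + t^8/40320) - Real.cos t) ?_ (by norm_num) ?_
  · intro x hx; have := key x hx; linarith
  · intro t
    have h := ((((((hasDerivAt_id' (x := t)).sub ((hasDerivAt_pow 3 t).div_const 6)).add ((hasDerivAt_pow 5 t).div_const 120)).sub ((hasDerivAt_pow 7 t).div_const 5040)).add ((hasDerivAt_pow 9 t).div_const 362880))).sub (Real.hasDerivAt_sin t)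
    refine h.congr_deriv ?_
    push_cast; ring
  · intro t ht
    have := cos_le8 t ht; linarith

lemma cos_ge10 : ∀ x : ℝ, 0 ≤ x → 1 - x^2/2 + x^4/24 - x^6/720 + x^8/40320 - x^10/3628800 ≤ Real.cos x := by
  have key := nonneg_of_hasDerivAt (f := fun t : ℝ => Real.cos t - (1 - t^2/2 + t^4/24 - t^6/720 + t^8/40320 - t^10/3628800))
    (f' := fun t : ℝ => (t - t^3/6 + t^5/120 - t^7/5040 + t^9/362880) - Real.sin t) ?_ (by norm_num) ?_
  · intro x hx; have := key x hx; linarith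
  · intro t
    have h := (Real.hasDerivAt_cos t).sub (((((((hasDerivAt_const t (1:ℝ)).sub ((hasDerivAt_pow 2 t).div_const 2)).add ((hasDerivAt_pow 4 t).div_const 24)).sub ((hasDerivAt_pow 6 t).div_const 720)).add ((hasDerivAt_pow 8 t).div_const 40320)).sub ((hasDerivAt_pow 10 t).div_const 3628800)))
    refine h.congr_deriv ?_
    push_cast; ring
  · intro t ht
    have := sin_le9 t ht; linarith

lemma sin_ge11 : ∀ x : ℝ, 0 ≤ x → x - x^3/6 + x^5/120 - x^7/5040 + x^9/362880 - x^11/39916800 ≤ Real.sin x := by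
  have key := nonneg_of_hasDerivAt (f := fun t : ℝ => Real.sin t - (t - t^3/6 + t^5/120 - t^7/5040 + t^9/362880 - t^11/39916800))
    (f' := fun t : ℝ => Real.cos t - (1 - t^2/2 + t^4/24 - t^6/720 + t^8/40320 - t^10/3628800)) ?_ (by norm_num) ?_
  · intro x hx; have := key x hx; linarith
  · intro t
    have h := (Real.hasDerivAt_sin t).sub (((((((hasDerivAt_id' (x := t)).sub ((hasDerivAt_pow 3 t).div_const 6)).add ((hasDerivAt_pow 5 t).div_const 120)).sub ((hasDerivAt_pow 7 t).div_const 5040)).add ((hasDerivAt_pow 9 t).div_const 362880)).sub ((hasDerivAt_pow 11 t).div_const 39916800)))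
    refine h.congr_deriv ?_
    push_cast; ring
  · intro t ht
    have := cos_ge10 t ht; linarith

lemma cos_le12 : ∀ x : ℝ, 0 ≤ x → Real.cos x ≤ 1 - x^2/2 + x^4/24 - x^6/720 + x^8/40320 - x^10/3628800 + x^12/479001600 := by
  have key := nonneg_of_hasDerivAt (f := fun t : ℝ => (1 - t^2/2 + t^4/24 - t^6/720 + t^8/40320 - t^10/3628800 + t^12/479001600) - Real.cos t)
    (f' := fun t : ℝ => Real.sin t - (t - t^3/6 + t^5/120 - t^7/5040 + t^9/362880 - t^11/39916800)) ?_ (by norm_num) ?_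
  · intro x hx; have := key x hx; linarith
  · intro t
    have h := ((((((((hasDerivAt_const t (1:ℝ)).sub ((hasDerivAt_pow 2 t).div_const 2)).add ((hasDerivAt_pow 4 t).div_const 24)).sub ((hasDerivAt_pow 6 t).div_const 720)).add ((hasDerivAt_pow 8 t).div_const 40320)).sub ((hasDerivAt_pow 10 t).div_const 3628800)).add ((hasDerivAt_pow 12 t).div_const 479001600))).sub (Real.hasDerivAt_cos t)
    refine h.congr_deriv ?_
    push_cast; ring
  · intro t ht
    have := sin_ge11 t ht; linarith

-- numeric bounds at u = 0.6759084 and v = 0.56167625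
lemma sin_u_lb : (0.6256062529:ℝ) ≤ Real.sin 0.6759084 :=
  le_trans (by norm_num) (sin_ge11 0.6759084 (by norm_num))
lemma sin_u_ub : Real.sin 0.6759084 ≤ 0.6256062534 :=
  le_trans (sin_le9 0.6759084 (by norm_num)) (by norm_num)
lemma cos_u_lb : (0.7801389723:ℝ) ≤ Real.cos 0.6759084 :=
  le_trans (by norm_num) (cos_ge10 0.6759084 (by norm_num))
lemma cos_u_ub : Real.cos 0.6759084 ≤ 0.7801389724 :=
  le_trans (cos_le12 0.6759084 (by norm_num)) (by norm_num)

lemma sin_v_lb : (0.5326056623:ℝ) ≤ Real.sin 0.56167625 :=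
  le_trans (by norm_num) (sin_ge11 0.56167625 (by norm_num))
lemma sin_v_ub : Real.sin 0.56167625 ≤ 0.5326056625 :=
  le_trans (sin_le9 0.56167625 (by norm_num)) (by norm_num)
lemma cos_v_lb : (0.8463635202:ℝ) ≤ Real.cos 0.56167625 :=
  le_trans (by norm_num) (cos_ge10 0.56167625 (by norm_num))
lemma cos_v_ub : Real.cos 0.56167625 ≤ 0.8463635203 :=
  le_trans (cos_le12 0.56167625 (by norm_num)) (by norm_num)

-- a = 1.3518168 = 2*u
lemma sin_a_lb : (0.9761196384:ℝ) ≤ Real.sin 1.3518168 := by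
  have h : (1.3518168:ℝ) = 2 * 0.6759084 := by norm_num
  rw [h, Real.sin_two_mul]
  nlinarith [sin_u_lb, sin_u_ub, cos_u_lb, cos_u_ub,
    mul_nonneg (sub_nonneg.2 sin_u_lb) (sub_nonneg.2 cos_u_lb)]
lemma sin_a_ub : Real.sin 1.3518168 ≤ 0.9761196394 := by
  have h : (1.3518168:ℝ) = 2 * 0.6759084 := by norm_num
  rw [h, Real.sin_two_mul]
  nlinarith [sin_u_lb, sin_u_ub, cos_u_lb, cos_u_ub,
    mul_nonneg (sub_nonneg.2 sin_u_ub) (sub_nonneg.2 cos_u_ub)]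
lemma cos_a_lb : (0.2172336322:ℝ) ≤ Real.cos 1.3518168 := by
  have h : (1.3518168:ℝ) = 2 * 0.6759084 := by norm_num
  rw [h, Real.cos_two_mul]
  nlinarith [cos_u_lb, cos_u_ub]
lemma cos_a_ub : Real.cos 1.3518168 ≤ 0.2172336326 := by
  have h : (1.3518168:ℝ) = 2 * 0.6759084 := by norm_num
  rw [h, Real.cos_two_mul]
  nlinarith [cos_u_lb, cos_u_ub]

-- chain to x₁ = 4.49341 = 8*v
lemma sin_2v_lb : (0.9015560064:ℝ) ≤ Real.sin 1.1233525 := by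
  have h : (1.1233525:ℝ) = 2 * 0.56167625 := by norm_num
  rw [h, Real.sin_two_mul]
  nlinarith [sin_v_lb, sin_v_ub, cos_v_lb, cos_v_ub,
    mul_nonneg (sub_nonneg.2 sin_v_lb) (sub_nonneg.2 cos_v_lb)]
lemma sin_2v_ub : Real.sin 1.1233525 ≤ 0.9015560069 := by
  have h : (1.1233525:ℝ) = 2 * 0.56167625 := by norm_num
  rw [h, Real.sin_two_mul]
  nlinarith [sin_v_lb, sin_v_ub, cos_v_lb, cos_v_ub,
    mul_nonneg (sub_nonneg.2 sin_v_ub) (sub_nonneg.2 cos_v_ub)]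
lemma cos_2v_lb : (0.4326624166:ℝ) ≤ Real.cos 1.1233525 := by
  have h : (1.1233525:ℝ) = 2 * 0.56167625 := by norm_num
  rw [h, Real.cos_two_mul]
  nlinarith [cos_v_lb, cos_v_ub]
lemma cos_2v_ub : Real.cos 1.1233525 ≤ 0.4326624170 := by
  have h : (1.1233525:ℝ) = 2 * 0.56167625 := by norm_num
  rw [h, Real.cos_two_mul]
  nlinarith [cos_v_lb, cos_v_ub]

lemma sin_4v_lb : (0.7801388008:ℝ) ≤ Real.sin 2.246705 := by
  have h : (2.246705:ℝ) = 2 * 1.1233525 := by norm_num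
  rw [h, Real.sin_two_mul]
  nlinarith [sin_2v_lb, sin_2v_ub, cos_2v_lb, cos_2v_ub,
    mul_nonneg (sub_nonneg.2 sin_2v_lb) (sub_nonneg.2 cos_2v_lb)]
lemma sin_4v_ub : Real.sin 2.246705 ≤ 0.7801388021 := by
  have h : (2.246705:ℝ) = 2 * 1.1233525 := by norm_num
  rw [h, Real.sin_two_mul]
  nlinarith [sin_2v_lb, sin_2v_ub, cos_2v_lb, cos_2v_ub,
    mul_nonneg (sub_nonneg.2 sin_2v_ub) (sub_nonneg.2 cos_2v_ub)]
lemma cos_4v_lb : (-0.6256064666:ℝ) ≤ Real.cos 2.246705 := by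
  have h : (2.246705:ℝ) = 2 * 1.1233525 := by norm_num
  rw [h, Real.cos_two_mul]
  nlinarith [cos_2v_lb, cos_2v_ub]
lemma cos_4v_ub : Real.cos 2.246705 ≤ -0.6256064658 := by
  have h : (2.246705:ℝ) = 2 * 1.1233525 := by norm_num
  rw [h, Real.cos_two_mul]
  nlinarith [cos_2v_lb, cos_2v_ub]

lemma sin_x1_ub : Real.sin 4.49341 ≤ -0.976119756 := by
  have h : (4.49341:ℝ) = 2 * 2.246705 := by norm_num
  rw [h, Real.sin_two_mul]
  nlinarith [sin_4v_lb, sin_4v_ub, cos_4v_lb, cos_4v_ub,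
    mul_nonneg (sub_nonneg.2 sin_4v_lb) (sub_nonneg.2 cos_4v_ub)]
lemma sin_tangent_line {a t : ℝ} (ha0 : 0 ≤ a) (hapi : a ≤ π) (ht0 : 0 ≤ t) (htpi : t ≤ π) :
    Real.sin t ≤ Real.sin a + Real.cos a * (t - a) := by
  rcases lt_trichotomy t a with h | rfl | h
  · obtain ⟨c, hc, hceq⟩ := exists_hasDerivAt_eq_slope Real.sin Real.cos h
      Real.continuous_sin.continuousOn (fun x _ => Real.hasDerivAt_sin x)
    rw [eq_div_iff (sub_ne_zero.2 (ne_of_gt h))] at hceq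
    have hca : Real.cos a ≤ Real.cos c :=
      Real.cos_le_cos_of_nonneg_of_le_pi (by linarith [hc.1]) hapi hc.2.le
    nlinarith [mul_nonneg (sub_nonneg.2 hca) (by linarith : (0:ℝ) ≤ a - t)]
  · simp
  · obtain ⟨c, hc, hceq⟩ := exists_hasDerivAt_eq_slope Real.sin Real.cos h
      Real.continuous_sin.continuousOn (fun x _ => Real.hasDerivAt_sin x)
    rw [eq_div_iff (sub_ne_zero.2 (ne_of_gt h))] at hceq
    have hca : Real.cos c ≤ Real.cos a :=
      Real.cos_le_cos_of_nonneg_of_le_pi ha0 (by linarith [hc.2]) hc.1.le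
    nlinarith [mul_nonneg (sub_nonneg.2 hca) (by linarith : (0:ℝ) ≤ t - a)]

lemma pi_lb : (3.14159265:ℝ) < π := lt_trans (by norm_num) Real.pi_gt_d20
lemma pi_ub : π < (3.1415927:ℝ) := lt_trans Real.pi_lt_d20 (by norm_num)

/-- key pointwise lower bound for positive arguments -/
lemma sin_ge_neg_mul (y : ℝ) (hy : 0 < y) : -(0.2172339:ℝ) * y ≤ Real.sin y := by
  rcases le_or_gt y π with hpi | hpi
  · have h1 : 0 ≤ Real.sin y := Real.sin_nonneg_of_nonneg_of_le_pi hy.le hpi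
    nlinarith
  · rcases le_or_gt 4.61 y with hy2 | hy2
    · have h1 : -1 ≤ Real.sin y := Real.neg_one_le_sin y
      nlinarith
    · -- π < y < 4.61
      set t := y - π with ht
      have ht0 : 0 ≤ t := by simp [ht]; linarith
      have htT : t ≤ 1.4685 := by simp [ht]; linarith [pi_lb]
      have hsy : Real.sin y = -Real.sin t := by
        rw [show y = t + π by ring, Real.sin_add_pi]
      have htan : Real.sin t ≤ Real.sin 1.3518168 + Real.cos 1.3518168 * (t - 1.3518168) :=
        sin_tangent_line (by norm_num) (by linarith [pi_lb]) ht0 (by linarith [pi_lb])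
      have hcaL : Real.cos 1.3518168 ≤ 0.2172339 := le_trans cos_a_ub (by norm_num)
      have hprod : 0 ≤ ((0.2172339:ℝ) - Real.cos 1.3518168) * t :=
        mul_nonneg (by linarith) ht0
      rw [hsy]
      nlinarith [sin_a_ub, cos_a_lb, pi_lb]

lemma sinc_neg_eq (x : ℝ) : sinc (-x) = sinc x := by
  unfold sinc
  rcases eq_or_ne x 0 with rfl | h
  · simp
  · rw [if_neg (neg_ne_zero.2 h), if_neg h, Real.sin_neg, neg_div_neg_eq]

lemma sinc_ge (x : ℝ) : -(0.2172339:ℝ) ≤ sinc x := by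
  have key : ∀ y : ℝ, 0 < y → -(0.2172339:ℝ) ≤ sinc y := by
    intro y hy
    unfold sinc
    rw [if_neg (ne_of_gt hy), le_div_iff₀ hy]
    exact sin_ge_neg_mul y hy
  rcases lt_trichotomy x 0 with h | rfl | h
  · rw [← sinc_neg_eq x]; exact key (-x) (by linarith)
  · unfold sinc; norm_num
  · exact key x h

/-- The function equal to `sin x / x` for `x ≠ 0` and to `1` at `0` attains a global
minimum on `ℝ`, and its minimum value `c₀` satisfies `−0.217234 < c₀ < −0.217233`. -/
theorem statement19 :
    (∃ x₀ : ℝ, (∀ x : ℝ, sinc x₀ ≤ sinc x) ∧ sinc x₀ = c0) ∧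
    -0.217234 < c0 ∧ c0 < -0.217233 := by
  have hKcont : ContinuousOn sinc (Icc (3:ℝ) 5) := by
    refine ContinuousOn.congr
      ((Real.continuous_sin.continuousOn).div continuousOn_id
        (fun x hx => by have := hx.1; intro h; simp only [id] at h; rw [h] at this; norm_num at this)) ?_
    intro x hx
    have hx0 : x ≠ 0 := by have := hx.1; intro h; rw [h] at this; norm_num at this
    simp [sinc, hx0]
  obtain ⟨x₀, hx₀K, hmin⟩ := (isCompact_Icc (a := (3:ℝ)) (b := 5)).exists_isMinOn
    ⟨4, by norm_num⟩ hKcont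
  have hx₁K : (4.49341:ℝ) ∈ Icc (3:ℝ) 5 := by norm_num
  have hupper : sinc 4.49341 < -0.217233 := by
    unfold sinc
    rw [if_neg (by norm_num), div_lt_iff₀ (by norm_num : (0:ℝ) < 4.49341)]
    calc Real.sin 4.49341 ≤ -0.976119756 := sin_x1_ub
    _ < -0.217233 * 4.49341 := by norm_num
  have hminx₁ : sinc x₀ ≤ sinc 4.49341 := isMinOn_iff.mp hmin 4.49341 hx₁K
  have hneg : sinc x₀ < -0.217233 := lt_of_le_of_lt hminx₁ hupper
  have hglobal : ∀ x : ℝ, sinc x₀ ≤ sinc x := by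
    have hpos : ∀ x : ℝ, 0 ≤ x → sinc x₀ ≤ sinc x := by
      intro x hx
      rcases lt_or_ge x 3 with h3 | h3
      · have h0 : 0 ≤ sinc x := by
          unfold sinc
          split_ifs with h
          · norm_num
          · have hx' : 0 < x := lt_of_le_of_ne hx (Ne.symm h)
            exact div_nonneg
              (Real.sin_nonneg_of_nonneg_of_le_pi hx (by linarith [Real.pi_gt_three])) hx'.le
        linarith
      · rcases le_or_gt x 5 with h5 | h5
        · exact isMinOn_iff.mp hmin x ⟨h3, h5⟩
        · have h0 : (-0.2:ℝ) ≤ sinc x := by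
            unfold sinc
            rw [if_neg (by intro h; rw [h] at h5; norm_num at h5),
              le_div_iff₀ (by linarith : (0:ℝ) < x)]
            nlinarith [Real.neg_one_le_sin x]
          linarith
    intro x
    rcases le_or_gt 0 x with h | h
    · exact hpos x h
    · rw [← sinc_neg_eq x]; exact hpos (-x) (by linarith)
  have hc0 : sinc x₀ = c0 := by
    have hL : IsLeast (Set.range sinc) (sinc x₀) :=
      ⟨⟨x₀, rfl⟩, by rintro y ⟨z, rfl⟩; exact hglobal z⟩
    exact (hL.csInf_eq).symm
  refine ⟨⟨x₀, hglobal, hc0⟩, ?_, ?_⟩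
  · rw [← hc0]
    have := sinc_ge x₀
    linarith
  · rw [← hc0]
    exact lt_of_le_of_lt hminx₁ hupper

end
end
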